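/- arXiv:2203.02383 — 2 statements merged into one kernel-verified Lean document; each statement's English description precedes it below -/
import Mathlib

section
/- Let {r_K}_{K>0} be a sequence of nonnegative reals satisfying r_K ≤ a/(γK) + bγ/K + c₁γ + c₂γ² for every K > 0 whenever 0 < γ ≤ 1/h, where a, b, c₁, c₂ ≥ 0 and h > 0. Then for every K > 0, choosing the stepsize γ = min{1/h, √(a/b), √(a/(c₁K)), (a/(c₂K))^{1/3}} yields r_K ≤ c·[(h·a + √(ab))/K + √(a·c₁/K) + (a²c₂)^{1/3}/K^{2/3}], where c > 0 is an absolute constant. -/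
private lemma cube_eq' {x y : ℝ} (hx : 0 ≤ x) (hy : 0 ≤ y) (h : x ^ 3 = y ^ 3) : x = y :=
  le_antisymm (le_of_pow_le_pow_left₀ three_ne_zero hy h.le)
    (le_of_pow_le_pow_left₀ three_ne_zero hx h.ge)

private lemma rpow_cube' {x : ℝ} (hx : 0 ≤ x) (p : ℝ) : (x ^ p) ^ (3:ℕ) = x ^ (p * 3) := by
  rw [← Real.rpow_natCast (x ^ p) 3, ← Real.rpow_mul hx]
  norm_num

private lemma sqrt_helper {a b : ℝ} (ha : 0 < a) (hb : 0 ≤ b) :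
    a * Real.sqrt (b / a) = Real.sqrt (a * b) := by
  rw [show a * Real.sqrt (b/a) = Real.sqrt (a^2) * Real.sqrt (b/a) by rw [Real.sqrt_sq ha.le],
    ← Real.sqrt_mul (sq_nonneg a)]
  congr 1
  field_simp

private lemma sqrt_helper2 {a b : ℝ} (ha : 0 < a) (hb : 0 ≤ b) :
    Real.sqrt (a * b) * Real.sqrt (b / a) = b := by
  rw [← Real.sqrt_mul (by positivity)]
  rw [show a * b * (b / a) = b ^ 2 by field_simp]
  exact Real.sqrt_sq hb

/-- Lemma I.3 of Gorbunov et al. (2021). If a nonnegative sequence satisfies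
`r_K ≤ a/(γK) + bγ/K + c₁γ + c₂γ²` for every `K > 0` and every stepsize `0 < γ ≤ 1/h`, then
(choosing `γ = min{1/h, √(a/b), √(a/(c₁K)), (a/(c₂K))^{1/3}}`) one gets, for every `K > 0`,
`r_K ≤ c·[(ha + √(ab))/K + √(a c₁/K) + (a²c₂)^{1/3}/K^{2/3}]` for an absolute constant `c`. -/
theorem lemma_rate_convex :
    ∃ c : ℝ, 0 < c ∧
      ∀ (h a b c1 c2 : ℝ) (r : ℕ → ℝ),
        0 < h → 0 ≤ a → 0 ≤ b → 0 ≤ c1 → 0 ≤ c2 →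
        (∀ K, 0 ≤ r K) →
        (∀ γ : ℝ, 0 < γ → γ ≤ 1 / h → ∀ K : ℕ, 0 < K →
          r K ≤ a / (γ * K) + b * γ / K + c1 * γ + c2 * γ ^ 2) →
        ∀ K : ℕ, 0 < K →
          r K ≤ c * ((h * a + Real.sqrt (a * b)) / K + Real.sqrt (a * c1 / K)
              + (a ^ 2 * c2) ^ ((1 : ℝ) / 3) / (K : ℝ) ^ ((2 : ℝ) / 3)) := by
  refine ⟨2, by norm_num, ?_⟩
  intro h a b c1 c2 r hh ha hb hc1 hc2 hr hyp K hK
  have hK' : (0:ℝ) < (K:ℝ) := by exact_mod_cast hK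
  have hK1 : (1:ℝ) ≤ (K:ℝ) := by exact_mod_cast hK
  set Kr : ℝ := (K:ℝ) with hKr
  -- the bracket is nonnegative
  have hbr : 0 ≤ (h * a + Real.sqrt (a * b)) / Kr + Real.sqrt (a * c1 / Kr)
      + (a ^ 2 * c2) ^ ((1 : ℝ) / 3) / Kr ^ ((2 : ℝ) / 3) := by positivity
  rcases ha.eq_or_lt with ha0 | ha0
  · -- a = 0 : show r K ≤ 0
    have hrK : r K ≤ 0 := by
      by_contra hpos
      push_neg at hpos
      set C : ℝ := b + c1 + c2 / h with hC
      have hC0 : 0 ≤ C := by positivity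
      set γ : ℝ := min (1 / h) (r K / (2 * (C + 1))) with hγ
      have hγpos : 0 < γ := lt_min (by positivity) (by positivity)
      have hγh : γ ≤ 1 / h := min_le_left _ _
      have h1 := hyp γ hγpos hγh K hK
      rw [← ha0] at h1
      have e0 : (0:ℝ) / (γ * Kr) = 0 := by simp
      have hbg : b * γ / Kr ≤ b * γ := by
        apply div_le_self (by positivity) hK1
      have hcg : c2 * γ ^ 2 ≤ (c2 / h) * γ := by
        have : γ * γ ≤ (1/h) * γ := mul_le_mul_of_nonneg_right hγh hγpos.le
        calc c2 * γ ^ 2 = c2 * (γ * γ) := by ring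
          _ ≤ c2 * ((1/h) * γ) := mul_le_mul_of_nonneg_left this hc2
          _ = (c2 / h) * γ := by ring
      have h2 : r K ≤ C * γ := by
        rw [e0] at h1
        calc r K ≤ 0 + b * γ / Kr + c1 * γ + c2 * γ ^ 2 := h1
          _ ≤ b * γ + c1 * γ + (c2 / h) * γ := by linarith
          _ = C * γ := by ring
      have h3 : C * γ ≤ (C + 1) * (r K / (2 * (C + 1))) := by
        apply mul_le_mul (by linarith) (min_le_right _ _) hγpos.le (by linarith)
      have h4 : (C + 1) * (r K / (2 * (C + 1))) = r K / 2 := by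
        field_simp
      linarith
    calc r K ≤ 0 := hrK
      _ ≤ 2 * _ := by linarith
  · -- a > 0
    set sb : ℝ := Real.sqrt (b / a) with hsb
    set sc : ℝ := Real.sqrt (c1 * Kr / a) with hsc
    set t : ℝ := (c2 * Kr / a) ^ ((1:ℝ)/3) with ht
    have hsb0 : 0 ≤ sb := Real.sqrt_nonneg _
    have hsc0 : 0 ≤ sc := Real.sqrt_nonneg _
    have ht0 : 0 ≤ t := Real.rpow_nonneg (by positivity) _
    set D : ℝ := sb + sc + t with hD
    have hD0 : 0 ≤ D := by positivity
    have hhD : 0 < h + D := by linarith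
    set γ : ℝ := 1 / (h + D) with hγ
    have hγpos : 0 < γ := by positivity
    have hγh : γ ≤ 1 / h := by
      apply one_div_le_one_div_of_le hh
      linarith
    have hγD : γ * (h + D) = 1 := by
      rw [hγ]; field_simp
    have h1 := hyp γ hγpos hγh K hK
    -- abbreviations for target terms
    set S1 : ℝ := Real.sqrt (a * b) with hS1
    set S2 : ℝ := Real.sqrt (a * c1 / Kr) with hS2
    set S3 : ℝ := (a ^ 2 * c2) ^ ((1:ℝ)/3) / Kr ^ ((2:ℝ)/3) with hS3
    have hS10 : 0 ≤ S1 := Real.sqrt_nonneg _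
    have hS20 : 0 ≤ S2 := Real.sqrt_nonneg _
    have hS30 : 0 ≤ S3 := by positivity
    -- first term
    have e1 : a * sb = S1 := sqrt_helper ha0 hb
    have e2 : a * sc / Kr = S2 := by
      rw [hsc, sqrt_helper ha0 (by positivity), hS2]
      rw [show a * c1 / Kr = (a * (c1 * Kr)) / Kr ^ 2 by field_simp,
        Real.sqrt_div (by positivity), Real.sqrt_sq hK'.le]
    have ht3 : t ^ (3:ℕ) = c2 * Kr / a := by
      rw [ht, rpow_cube' (by positivity)]
      norm_num
    have hS33 : S3 ^ (3:ℕ) = a ^ 2 * c2 / Kr ^ 2 := by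
      rw [hS3, div_pow, rpow_cube' (by positivity), rpow_cube' hK'.le]
      norm_num
    have e3 : a * t / Kr = S3 := by
      apply cube_eq' (by positivity) hS30
      rw [div_pow, mul_pow, ht3, hS33]
      field_simp
    have e6 : S3 * t ^ 2 = c2 := by
      apply cube_eq' (by positivity) hc2
      rw [mul_pow, hS33, ← pow_mul, show 2 * 3 = 3 * 2 by ring, pow_mul, ht3]
      field_simp
    have e4 : S1 * sb = b := sqrt_helper2 ha0 hb
    have e5 : S2 * sc = c1 := by
      rw [hS2, hsc, ← Real.sqrt_mul (by positivity),
        show a * c1 / Kr * (c1 * Kr / a) = c1 ^ 2 by field_simp]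
      exact Real.sqrt_sq hc1
    -- bounds using γ * x ≤ 1 for x ∈ {sb, sc, t}
    have gb : γ * sb ≤ 1 := by
      calc γ * sb ≤ γ * (h + D) := by
            apply mul_le_mul_of_nonneg_left _ hγpos.le
            rw [hD]; linarith
        _ = 1 := hγD
    have gc : γ * sc ≤ 1 := by
      calc γ * sc ≤ γ * (h + D) := by
            apply mul_le_mul_of_nonneg_left _ hγpos.le
            rw [hD]; linarith
        _ = 1 := hγD
    have gt' : γ * t ≤ 1 := by
      calc γ * t ≤ γ * (h + D) := by
            apply mul_le_mul_of_nonneg_left _ hγpos.le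
            rw [hD]; linarith
        _ = 1 := hγD
    -- term bounds
    have T1 : a / (γ * Kr) = h * a / Kr + S1 / Kr + S2 + S3 := by
      rw [← e1, ← e2, ← e3, hγ]
      field_simp
      ring
    have T2 : b * γ / Kr ≤ S1 / Kr := by
      apply div_le_div_of_nonneg_right _ hK'.le
      calc b * γ = S1 * (γ * sb) := by rw [← e4]; ring
        _ ≤ S1 * 1 := mul_le_mul_of_nonneg_left gb hS10
        _ = S1 := mul_one _
    have T3 : c1 * γ ≤ S2 := by
      calc c1 * γ = S2 * (γ * sc) := by rw [← e5]; ring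
        _ ≤ S2 * 1 := mul_le_mul_of_nonneg_left gc hS20
        _ = S2 := mul_one _
    have T4 : c2 * γ ^ 2 ≤ S3 := by
      calc c2 * γ ^ 2 = S3 * (γ * t) ^ 2 := by rw [← e6]; ring
        _ ≤ S3 * 1 := by
            apply mul_le_mul_of_nonneg_left _ hS30
            calc (γ * t) ^ 2 ≤ 1 ^ 2 := by
                  apply pow_le_pow_left₀ (by positivity) gt'
              _ = 1 := one_pow _
        _ = S3 := mul_one _
    have hha : 0 ≤ h * a / Kr := by positivity
    calc r K ≤ a / (γ * Kr) + b * γ / Kr + c1 * γ + c2 * γ ^ 2 := h1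
      _ ≤ (h * a / Kr + S1 / Kr + S2 + S3) + S1 / Kr + S2 + S3 := by
          rw [T1]; linarith
      _ ≤ 2 * ((h * a + S1) / Kr + S2 + S3) := by
          rw [add_div]; linarith
end

section
/- Let f_1, …, f_m: ℝ^d → ℝ be convex and differentiable, with each f_j being L_j-smooth with L_j > 0, and set F(x) = (1/m)Σ_{j=1}^m f_j(x) and L̄ = (1/m)Σ_{j=1}^m L_j. Then for all x, y ∈ ℝ^d: (L̄/m)Σ_{j=1}^m (1/L_j)‖∇f_j(x) − ∇f_j(y)‖² ≤ 2 L̄ (F(x) − F(y) − ⟨∇F(y), x − y⟩). In particular, importance sampling (f_ξ = (L̄/L_j) f_j with probability L_j/(m L̄)) satisfies the expected smoothness property with constant 𝓛 = L̄. -/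
open scoped BigOperators RealInnerProductSpace
open Set Filter Topology

section Aux

variable {E : Type*} [NormedAddCommGroup E] [InnerProductSpace ℝ E] [CompleteSpace E]

/-- Derivative of `f` along the segment from `y` to `x`. -/
lemma line_hasDerivAt {f : E → ℝ} {g : E → E} (hdiff : ∀ z, HasGradientAt f (g z) z)
    (x y : E) (t : ℝ) :
    HasDerivAt (fun s : ℝ => f (y + s • (x - y))) ⟪g (y + t • (x - y)), x - y⟫ t := by
  have hc : HasDerivAt (fun s : ℝ => y + s • (x - y)) (x - y) t := by
    simpa using ((hasDerivAt_id t).smul_const (x - y)).const_add y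
  have := (hdiff (y + t • (x - y))).hasFDerivAt.comp_hasDerivAt t hc
  simpa [InnerProductSpace.toDual_apply_apply, Function.comp_def] using this

/-- First-order condition for convexity. -/
lemma first_order {f : E → ℝ} {g : E → E} (hdiff : ∀ z, HasGradientAt f (g z) z)
    (hconv : ConvexOn ℝ Set.univ f) (x y : E) :
    ⟪g y, x - y⟫ ≤ f x - f y := by
  have hD : HasDerivAt (fun s : ℝ => f (y + s • (x - y))) ⟪g y, x - y⟫ 0 := by
    simpa using line_hasDerivAt hdiff x y 0
  have hslope : Tendsto (slope (fun s : ℝ => f (y + s • (x - y))) 0) (𝓝[≠] (0:ℝ))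
      (𝓝 ⟪g y, x - y⟫) := hasDerivAt_iff_tendsto_slope.1 hD
  have hslope' : Tendsto (slope (fun s : ℝ => f (y + s • (x - y))) 0) (𝓝[>] (0:ℝ))
      (𝓝 ⟪g y, x - y⟫) :=
    hslope.mono_left (nhdsWithin_mono _ (fun t ht => ne_of_gt ht))
  refine le_of_tendsto hslope' ?_
  filter_upwards [Ioc_mem_nhdsGT_of_mem (Set.left_mem_Ico.2 one_pos)] with t ht
  have ht0 : (0:ℝ) < t := ht.1
  have ht1 : t ≤ 1 := ht.2
  have hcc := hconv.2 (Set.mem_univ y) (Set.mem_univ x)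
    (show (0:ℝ) ≤ 1 - t by linarith) (le_of_lt ht0) (by ring)
  have hco : y + t • (x - y) = (1 - t) • y + t • x := by
    simp [smul_sub, sub_smul]; abel
  rw [← hco] at hcc
  rw [slope_def_field, sub_zero, div_le_iff₀ ht0]
  simp only [zero_smul, add_zero]
  simp only [smul_eq_mul] at hcc
  nlinarith [hcc]

/-- Descent lemma. -/
lemma descent {f : E → ℝ} {g : E → E} (hdiff : ∀ z, HasGradientAt f (g z) z)
    {L : ℝ} (hL : 0 < L) (hLip : ∀ z w, ‖g z - g w‖ ≤ L * ‖z - w‖) (x y : E) :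
    f x ≤ f y + ⟪g y, x - y⟫ + L / 2 * ‖x - y‖ ^ 2 := by
  set ψ : ℝ → ℝ := fun t => f (y + t • (x - y)) - t * ⟪g y, x - y⟫ - L / 2 * t ^ 2 * ‖x - y‖ ^ 2
    with hψ
  have hψd : ∀ t : ℝ, HasDerivAt ψ
      (⟪g (y + t • (x - y)), x - y⟫ - ⟪g y, x - y⟫ - L * t * ‖x - y‖ ^ 2) t := by
    intro t
    have h1 := line_hasDerivAt hdiff x y t
    have h2 : HasDerivAt (fun s : ℝ => s * ⟪g y, x - y⟫) ⟪g y, x - y⟫ t := by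
      simpa using (hasDerivAt_id t).mul_const ⟪g y, x - y⟫
    have h3 : HasDerivAt (fun s : ℝ => L / 2 * s ^ 2 * ‖x - y‖ ^ 2)
        (L * t * ‖x - y‖ ^ 2) t := by
      have : HasDerivAt (fun s : ℝ => s ^ 2) (2 * t) t := by
        simpa using hasDerivAt_pow 2 t
      have := (this.const_mul (L / 2)).mul_const (‖x - y‖ ^ 2)
      exact this.congr_deriv (by ring)
    simpa [hψ, Pi.sub_def] using (h1.sub h2).sub h3
  have hanti : AntitoneOn ψ (Set.Icc 0 1) := by
    apply antitoneOn_of_deriv_nonpos (convex_Icc 0 1)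
    · exact fun t _ => ((hψd t).continuousAt).continuousWithinAt
    · intro t ht
      exact ((hψd t).differentiableAt).differentiableWithinAt
    · intro t ht
      rw [interior_Icc] at ht
      rw [(hψd t).deriv]
      have hb : ⟪g (y + t • (x - y)) - g y, x - y⟫ ≤ L * t * ‖x - y‖ ^ 2 := by
        calc ⟪g (y + t • (x - y)) - g y, x - y⟫ ≤ ‖g (y + t • (x - y)) - g y‖ * ‖x - y‖ :=
              real_inner_le_norm _ _
          _ ≤ (L * ‖(y + t • (x - y)) - y‖) * ‖x - y‖ := by
              gcongr; simpa using hLip (y + t • (x - y)) y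
          _ = L * t * ‖x - y‖ ^ 2 := by
              simp [norm_smul, abs_of_pos ht.1]; ring
      rw [inner_sub_left] at hb
      linarith
  have := hanti (Set.left_mem_Icc.2 zero_le_one) (Set.right_mem_Icc.2 zero_le_one) zero_le_one
  simp only [hψ, zero_smul, add_zero, one_smul, zero_mul, one_mul, one_pow, sub_zero,
    mul_one, zero_pow, mul_zero] at this
  have hxy : y + (x - y) = x := by abel
  rw [hxy] at this
  linarith

/-- Cocoercivity. -/
lemma cocoercive {f : E → ℝ} {g : E → E} (hdiff : ∀ z, HasGradientAt f (g z) z)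
    (hconv : ConvexOn ℝ Set.univ f) {L : ℝ} (hL : 0 < L)
    (hLip : ∀ z w, ‖g z - g w‖ ≤ L * ‖z - w‖) (x y : E) :
    ‖g x - g y‖ ^ 2 ≤ 2 * L * (f x - f y - ⟪g y, x - y⟫) := by
  set φ : E → ℝ := fun z => f z - ⟪g y, z⟫ with hφ
  set gφ : E → E := fun z => g z - g y with hgφ
  have hφdiff : ∀ z, HasGradientAt φ (gφ z) z := by
    intro z
    have h1 : HasFDerivAt f (InnerProductSpace.toDual ℝ E (g z)) z := (hdiff z).hasFDerivAt
    have h2 : HasFDerivAt (fun w : E => ⟪g y, w⟫) (InnerProductSpace.toDual ℝ E (g y)) z :=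
      (InnerProductSpace.toDual ℝ E (g y)).hasFDerivAt
    have := h1.sub h2
    rw [← map_sub] at this
    simpa [hφ, hgφ, Pi.sub_def] using this.hasGradientAt
  have hφconv : ConvexOn ℝ Set.univ φ := by
    apply hconv.sub
    refine ⟨convex_univ, fun a _ b _ p q hp hq hpq => ?_⟩
    simp [inner_add_right, real_inner_smul_right]
  have hφLip : ∀ z w, ‖gφ z - gφ w‖ ≤ L * ‖z - w‖ := by
    intro z w; simpa [hgφ, sub_sub_sub_cancel_right] using hLip z w
  set w : E := x - L⁻¹ • gφ x with hw
  have h1 : φ w ≤ φ x + ⟪gφ x, w - x⟫ + L / 2 * ‖w - x‖ ^ 2 :=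
    descent hφdiff hL hφLip w x
  have hwx : w - x = -(L⁻¹ • gφ x) := by rw [hw]; abel
  have hinner : ⟪gφ x, w - x⟫ = -(L⁻¹ * ‖gφ x‖ ^ 2) := by
    rw [hwx, inner_neg_right, real_inner_smul_right, real_inner_self_eq_norm_sq]
  have hnorm : ‖w - x‖ ^ 2 = L⁻¹ ^ 2 * ‖gφ x‖ ^ 2 := by
    rw [hwx, norm_neg, norm_smul, mul_pow]
    simp [abs_of_pos (inv_pos.2 hL)]
  have h1' : φ w ≤ φ x - (2 * L)⁻¹ * ‖gφ x‖ ^ 2 := by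
    rw [hinner, hnorm] at h1
    have hL' : L ≠ 0 := ne_of_gt hL
    calc φ w ≤ φ x + -(L⁻¹ * ‖gφ x‖ ^ 2) + L / 2 * (L⁻¹ ^ 2 * ‖gφ x‖ ^ 2) := h1
      _ = φ x - (2 * L)⁻¹ * ‖gφ x‖ ^ 2 := by field_simp; ring
  have h2 : φ y ≤ φ w := by
    have := first_order hφdiff hφconv w y
    have hz : gφ y = 0 := by simp [hgφ]
    rw [hz] at this
    have h0 : (0:ℝ) ≤ φ w - φ y := by simpa using this
    linarith
  have h3 : φ x - φ y = f x - f y - ⟪g y, x - y⟫ := by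
    simp [hφ, inner_sub_right]; ring
  have h4 : (2 * L)⁻¹ * ‖gφ x‖ ^ 2 ≤ φ x - φ y := by
    have := le_trans h2 h1'
    linarith
  rw [h3] at h4
  have h2L : (0:ℝ) < 2 * L := by linarith
  calc ‖g x - g y‖ ^ 2 = (2 * L) * ((2 * L)⁻¹ * ‖gφ x‖ ^ 2) := by
        field_simp [hgφ, h2L.ne']; rfl
    _ ≤ 2 * L * (f x - f y - ⟪g y, x - y⟫) := by
        apply mul_le_mul_of_nonneg_left h4 (le_of_lt h2L)

end Aux


/-- If `f_1,…,f_m` are convex and `L_j`-smooth with `L_j > 0`, `F = (1/m)Σ f_j`,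
`L̄ = (1/m)Σ L_j`, then `(L̄/m)Σ_j (1/L_j)‖∇f_j(x) − ∇f_j(y)‖² ≤ 2 L̄ (F(x) − F(y) − ⟨∇F(y), x − y⟩)`
for all `x, y`; i.e., importance sampling satisfies expected smoothness with `𝓛 = L̄`. -/
theorem expected_smoothness_importance_sampling
    (d m : ℕ) (hm : 0 < m)
    (f : Fin m → EuclideanSpace ℝ (Fin d) → ℝ)
    (g : Fin m → EuclideanSpace ℝ (Fin d) → EuclideanSpace ℝ (Fin d))
    (hdiff : ∀ j z, HasGradientAt (f j) (g j z) z)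
    (hconv : ∀ j, ConvexOn ℝ Set.univ (f j))
    (Lc : Fin m → ℝ) (hLpos : ∀ j, 0 < Lc j)
    (hsmooth : ∀ j z w, ‖g j z - g j w‖ ≤ Lc j * ‖z - w‖)
    (Lbar : ℝ) (hLbar : Lbar = (m : ℝ)⁻¹ * ∑ j, Lc j) :
    ∀ x y : EuclideanSpace ℝ (Fin d),
      Lbar / m * ∑ j, (Lc j)⁻¹ * ‖g j x - g j y‖ ^ 2
        ≤ 2 * Lbar * ((m : ℝ)⁻¹ * ∑ j, f j x - (m : ℝ)⁻¹ * ∑ j, f j y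
            - ⟪(m : ℝ)⁻¹ • ∑ j, g j y, x - y⟫) := by
  intro x y
  have hL0 : 0 ≤ Lbar := by
    rw [hLbar]
    exact mul_nonneg (inv_nonneg.2 (Nat.cast_nonneg m))
      (Finset.sum_nonneg fun j _ => (hLpos j).le)
  have hsum : ∑ j, (Lc j)⁻¹ * ‖g j x - g j y‖ ^ 2
      ≤ ∑ j, 2 * (f j x - f j y - ⟪g j y, x - y⟫) := by
    apply Finset.sum_le_sum
    intro j _
    have hkey := cocoercive (hdiff j) (hconv j) (hLpos j) (hsmooth j) x y
    calc (Lc j)⁻¹ * ‖g j x - g j y‖ ^ 2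
        ≤ (Lc j)⁻¹ * (2 * Lc j * (f j x - f j y - ⟪g j y, x - y⟫)) :=
          mul_le_mul_of_nonneg_left hkey (inv_nonneg.2 (hLpos j).le)
      _ = ((Lc j)⁻¹ * Lc j) * (2 * (f j x - f j y - ⟪g j y, x - y⟫)) := by ring
      _ = 2 * (f j x - f j y - ⟪g j y, x - y⟫) := by
          rw [inv_mul_cancel₀ (hLpos j).ne', one_mul]
  have hinner : ⟪(m:ℝ)⁻¹ • ∑ j, g j y, x - y⟫ = (m:ℝ)⁻¹ * ∑ j, ⟪g j y, x - y⟫ := by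
    rw [real_inner_smul_left, sum_inner]
  rw [hinner]
  have hS : ∑ j, 2 * (f j x - f j y - ⟪g j y, x - y⟫)
      = 2 * (∑ j, f j x - ∑ j, f j y - ∑ j, ⟪g j y, x - y⟫) := by
    simp only [mul_sub, Finset.sum_sub_distrib, Finset.mul_sum]
  have hre : 2 * Lbar * ((m:ℝ)⁻¹ * ∑ j, f j x - (m:ℝ)⁻¹ * ∑ j, f j y
        - (m:ℝ)⁻¹ * ∑ j, ⟪g j y, x - y⟫)
      = Lbar / m * ∑ j, 2 * (f j x - f j y - ⟪g j y, x - y⟫) := by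
    rw [hS]; ring
  rw [hre]
  exact mul_le_mul_of_nonneg_left hsum (div_nonneg hL0 (Nat.cast_nonneg m))
end
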